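/- Let w ∈ S_n be 321-avoiding. Then in any reduced word for w, any two occurrences of the same generator s_i are separated by at least one occurrence of s_{i-1} and at least one occurrence of s_{i+1}. -/

import Mathlib

open Polynomial

/-- The simple transposition `s_i = (i, i+1)` (1-based) in `S_n`, acting on `Fin n`
(0-based positions `i-1` and `i`); equals `1` if `i` is out of range. -/
def gen (n : ℕ) (i : ℕ) : Equiv.Perm (Fin n) :=
  if h : 1 ≤ i ∧ i < n then Equiv.swap ⟨i - 1, by omega⟩ ⟨i, h.2⟩ else 1

/-- Product of the word `l` of generator indices. -/
def wordProd (n : ℕ) (l : List ℕ) : Equiv.Perm (Fin n) :=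
  (l.map (gen n)).prod

/-- Coxeter length of `w ∈ S_n`. -/
noncomputable def len (n : ℕ) (w : Equiv.Perm (Fin n)) : ℕ :=
  sInf {r | ∃ l : List ℕ, (∀ i ∈ l, 1 ≤ i ∧ i < n) ∧ wordProd n l = w ∧ l.length = r}

/-- `l` is a reduced word for `w`. -/
def IsReducedWord (n : ℕ) (w : Equiv.Perm (Fin n)) (l : List ℕ) : Prop :=
  (∀ i ∈ l, 1 ≤ i ∧ i < n) ∧ wordProd n l = w ∧ l.length = len n w

/-- Bruhat-Chevalley order: `x ≤ w` iff every reduced word for `w` contains a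
subword whose product is `x`. -/
def Bruhat (n : ℕ) (x w : Equiv.Perm (Fin n)) : Prop :=
  ∀ l, IsReducedWord n w l → ∃ t, t.Sublist l ∧ wordProd n t = x

/-- `w` is 321-avoiding: no `i < j < k` with `w i > w j > w k`. -/
def Avoids321 (n : ℕ) (w : Equiv.Perm (Fin n)) : Prop :=
  ¬ ∃ i j k : Fin n, i < j ∧ j < k ∧ w j < w i ∧ w k < w j

/-- Product of the subword of `l` selected by the mask `S` (set of selected positions). -/
def maskProd (n : ℕ) (l : List ℕ) (S : Finset ℕ) : Equiv.Perm (Fin n) :=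
  wordProd n (((List.range l.length).filter (fun j => decide (j ∈ S))).map (fun j => l.getD j 0))

/-- Position `j` of the word `l` is a defect of the mask `S`. -/
noncomputable def IsDefect (n : ℕ) (l : List ℕ) (S : Finset ℕ) (j : ℕ) : Prop :=
  len n (maskProd n (l.take j) S * gen n (l.getD j 0)) < len n (maskProd n (l.take j) S)

/-- The defect set `D(σ)` of the mask `S` on the word `l`. -/
noncomputable def defectSet (n : ℕ) (l : List ℕ) (S : Finset ℕ) : Finset ℕ :=
  (Finset.range l.length).filter (fun j =>
    len n (maskProd n (l.take j) S * gen n (l.getD j 0)) < len n (maskProd n (l.take j) S))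

/-- Deodhar's defect generating polynomial `P_x(a) = Σ_{σ : π(w^σ) = x} q^{|D(σ)|}`. -/
noncomputable def defPoly (n : ℕ) (l : List ℕ) (x : Equiv.Perm (Fin n)) : Polynomial ℤ :=
  ∑ S ∈ (Finset.range l.length).powerset,
    if maskProd n l S = x then (X : Polynomial ℤ) ^ (defectSet n l S).card else 0


set_option maxHeartbeats 1000000

namespace Stmt1Aux

theorem Equiv.Perm.apply_inv_self {α : Type*} (σ : Equiv.Perm α) (x : α) : σ (σ⁻¹ x) = x :=
  (Equiv.eq_symm_apply σ).mp rfl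

lemma gen_gen (n i : ℕ) : gen n i * gen n i = 1 := by
  unfold gen; split
  · exact Equiv.swap_mul_self _ _
  · simp

lemma gen_apply_val {n j : ℕ} (h1 : 1 ≤ j) (h2 : j < n) (p : Fin n) :
    ((gen n j) p).val = if p.val = j - 1 then j else if p.val = j then j - 1 else p.val := by
  unfold gen
  rw [dif_pos ⟨h1, h2⟩]
  rcases eq_or_ne p.val (j-1) with h | h
  · have : p = (⟨j-1, by omega⟩ : Fin n) := Fin.ext h
    rw [this, Equiv.swap_apply_left]
    simp [h]
  · rcases eq_or_ne p.val j with h' | h'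
    · have : p = (⟨j, h2⟩ : Fin n) := Fin.ext h'
      rw [this, Equiv.swap_apply_right]
      rw [if_neg (by omega), if_pos rfl]
    · rw [Equiv.swap_apply_of_ne_of_ne (fun hc => h (by rw [hc])) (fun hc => h' (by rw [hc]))]
      simp [h, h']


def Invs (n : ℕ) (w : Equiv.Perm (Fin n)) : Finset (Fin n × Fin n) :=
  Finset.univ.filter (fun p => p.1 < p.2 ∧ w p.2 < w p.1)

def Ninv (n : ℕ) (w : Equiv.Perm (Fin n)) : ℕ := (Invs n w).card

lemma exists_descent {n : ℕ} (σ : Equiv.Perm (Fin n)) (hσ : σ ≠ 1) :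
    ∃ k : ℕ, ∃ hk : k + 1 < n, σ ⟨k+1, hk⟩ < σ ⟨k, by omega⟩ := by
  by_contra hcon
  push_neg at hcon
  apply hσ
  have step : ∀ a : ℕ, ∀ h : a + 1 < n, σ ⟨a, by omega⟩ < σ ⟨a+1, h⟩ := by
    intro a h
    rcases lt_or_eq_of_le (hcon a h) with h2 | h2
    · exact h2
    · exfalso
      have := σ.injective h2
      have := congrArg Fin.val this
      simp at this
  have hsm : StrictMono σ := by
    intro i j hij
    have key : ∀ jv : ℕ, ∀ hj : jv < n, i.val < jv → σ i < σ ⟨jv, hj⟩ := by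
      intro jv
      induction jv with
      | zero => intro _ h; omega
      | succ m ihm =>
        intro hj him
        rcases Nat.lt_or_ge i.val m with h | h
        · exact lt_trans (ihm (by omega) h) (step m hj)
        · have : i.val = m := by omega
          have hi : i = ⟨m, by omega⟩ := Fin.ext this
          rw [hi]
          exact step m hj
    have := key j.val j.isLt hij
    simpa using this
  have heq : (σ : Fin n → Fin n) = id := by
    have h := @StrictMono.range_inj (Fin n) (Fin n) _ _ (inferInstance : WellFoundedLT (Fin n)) (⇑σ) id hsm strictMono_id
    apply h.mp
    rw [Set.range_id]
    exact σ.surjective.range_eq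
  exact Equiv.ext fun x => by simpa using congrFun heq x

lemma sort_lemma {n k : ℕ} (hk : k + 1 < n) (p q : Fin n) (hpq : p < q)
    (hne : ¬(p.val = k ∧ q.val = k + 1)) : gen n (k+1) p < gen n (k+1) q := by
  rw [Fin.lt_def]
  rw [gen_apply_val (by omega) hk, gen_apply_val (by omega) hk]
  rw [Fin.lt_def] at hpq
  have := q.isLt
  simp only [Nat.add_sub_cancel]
  split_ifs <;> omega

lemma Ninv_descent {n : ℕ} (σ : Equiv.Perm (Fin n)) (k : ℕ) (hk : k + 1 < n)
    (hdesc : σ ⟨k+1, hk⟩ < σ ⟨k, by omega⟩) :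
    Ninv n σ = Ninv n (σ * gen n (k+1)) + 1 := by
  obtain ⟨s, hs⟩ : ∃ s, s = gen n (k+1) := ⟨_, rfl⟩
  rw [← hs]
  have hss : ∀ p : Fin n, s (s p) = p := by
    intro p
    rw [hs]
    have := congrArg (fun g => g p) (gen_gen n (k+1))
    simpa using this
  have hsval : ∀ p : Fin n, (s p).val = if p.val = k then k+1 else if p.val = k+1 then k else p.val := by
    intro p
    rw [hs]
    have := gen_apply_val (j := k+1) (by omega) hk p
    simpa using this
  have hmain : Invs n σ = insert (⟨⟨k, by omega⟩, ⟨k+1, hk⟩⟩ : Fin n × Fin n)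
      ((Invs n (σ * s)).image (fun p => (s p.1, s p.2))) := by
    ext ⟨p, q⟩
    simp only [Invs, Finset.mem_insert, Finset.mem_image, Finset.mem_filter, Finset.mem_univ,
      true_and, Prod.mk.injEq, Prod.exists]
    constructor
    · rintro ⟨hpq, hinv⟩
      by_cases hc : p.val = k ∧ q.val = k + 1
      · left
        exact ⟨Fin.ext hc.1, Fin.ext hc.2⟩
      · right
        refine ⟨s p, s q, ⟨by rw [hs]; exact sort_lemma hk p q hpq hc, ?_⟩, by rw [hss], by rw [hss]⟩
        simpa [Equiv.Perm.mul_apply, hss] using hinv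
    · rintro (⟨h1, h2⟩ | ⟨p', q', ⟨hpq', hinv'⟩, hp, hq⟩)
      · subst h1; subst h2
        exact ⟨by simp [Fin.lt_def], hdesc⟩
      · subst hp; subst hq
        simp only [Equiv.Perm.mul_apply] at hinv'
        have hne : ¬(p'.val = k ∧ q'.val = k + 1) := by
          rintro ⟨h1, h2⟩
          have e1v : (s p').val = k + 1 := by rw [hsval p', if_pos h1]
          have e2v : (s q').val = k := by
            rw [hsval q', if_neg (show ¬(q'.val = k) by omega), if_pos h2]
          have e1 : s p' = ⟨k+1, hk⟩ := Fin.ext e1v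
          have e2 : s q' = ⟨k, by omega⟩ := Fin.ext e2v
          rw [e1, e2] at hinv'
          exact absurd hdesc (not_lt.mpr (le_of_lt hinv'))
        exact ⟨by rw [hs]; exact sort_lemma hk p' q' hpq' hne, hinv'⟩
  have hnotmem : (⟨⟨k, by omega⟩, ⟨k+1, hk⟩⟩ : Fin n × Fin n) ∉
      ((Invs n (σ * s)).image (fun p => (s p.1, s p.2))) := by
    simp only [Finset.mem_image, Prod.exists, Prod.mk.injEq, not_exists]
    rintro p q ⟨hmem, h1, h2⟩
    simp only [Invs, Finset.mem_filter] at hmem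
    have hp : p = s ⟨k, by omega⟩ := by rw [← h1, hss]
    have hq : q = s ⟨k+1, hk⟩ := by rw [← h2, hss]
    have hpv : p.val = k + 1 := by rw [hp, hsval]; simp
    have hqv : q.val = k := by
      rw [hq, hsval]
      rw [if_neg (show ¬((⟨k+1, hk⟩ : Fin n).val = k) by simp), if_pos rfl]
    have := hmem.2.1
    rw [Fin.lt_def, hpv, hqv] at this
    omega
  have hinj : Function.Injective (fun p : Fin n × Fin n => (s p.1, s p.2)) := by
    rintro ⟨p1, p2⟩ ⟨q1, q2⟩ h
    simp only [Prod.mk.injEq] at h ⊢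
    exact ⟨s.injective h.1, s.injective h.2⟩
  simp only [Ninv]
  rw [hmain, Finset.card_insert_of_notMem hnotmem, Finset.card_image_of_injective _ hinj]

lemma exists_word (n : ℕ) (w : Equiv.Perm (Fin n)) :
    ∃ l : List ℕ, (∀ i ∈ l, 1 ≤ i ∧ i < n) ∧ wordProd n l = w ∧ l.length = Ninv n w⁻¹ := by
  generalize hm : Ninv n w⁻¹ = m
  induction m using Nat.strong_induction_on generalizing w with
  | _ m ih =>
    by_cases hw : w = 1
    · subst hw
      refine ⟨[], by simp, by simp [wordProd], ?_⟩
      have : Invs n (1 : Equiv.Perm (Fin n))⁻¹ = ∅ := by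
        ext ⟨p, q⟩
        simp only [Invs, Finset.mem_filter, Finset.mem_univ, true_and, Finset.notMem_empty,
          iff_false, not_and, inv_one, Equiv.Perm.one_apply]
        intro h; exact not_lt.mpr (le_of_lt h)
      rw [← hm, Ninv, this]; simp
    · obtain ⟨k, hk, hdesc⟩ := exists_descent w⁻¹ (by simpa using hw)
      have hN := Ninv_descent w⁻¹ k hk hdesc
      set s := gen n (k+1) with hs
      have hsinv : s⁻¹ = s := by rw [eq_comm, eq_inv_iff_mul_eq_one]; exact gen_gen n (k+1)
      have hinvrw : (s * w)⁻¹ = w⁻¹ * s := by rw [mul_inv_rev, hsinv]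
      obtain ⟨l', hval', hprod', hlen'⟩ := ih (m - 1) (by omega) (s * w) (by rw [hinvrw]; rw [hm] at hN; omega)
      refine ⟨(k+1) :: l', ?_, ?_, ?_⟩
      · rintro i hi
        rcases List.mem_cons.mp hi with h | h
        · omega
        · exact hval' i h
      · rw [wordProd, List.map_cons, List.prod_cons, ← wordProd, hprod', ← mul_assoc, gen_gen, one_mul]
      · simp only [List.length_cons, hlen']
        rw [hm] at hN
        omega

def Pmap (n : ℕ) (l : List ℕ) (t : ℕ) : Equiv.Perm (Fin n) := (wordProd n (l.take t))⁻¹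

lemma take_succ_eq {l : List ℕ} {t : ℕ} (ht : t < l.length) :
    l.take (t+1) = l.take t ++ [l.getD t 0] := by
  rw [List.take_succ]
  congr 1
  rw [List.getElem?_eq_getElem ht]
  simp [List.getD_eq_getElem?_getD, List.getElem?_eq_getElem ht]

lemma getD_valid {n : ℕ} {l : List ℕ} (hval : ∀ i ∈ l, 1 ≤ i ∧ i < n) {t : ℕ}
    (ht : t < l.length) : 1 ≤ l.getD t 0 ∧ l.getD t 0 < n := by
  apply hval
  rw [List.getD_eq_getElem?_getD, List.getElem?_eq_getElem ht]
  exact List.getElem_mem ht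

lemma wordProd_append' (n : ℕ) (l1 l2 : List ℕ) :
    wordProd n (l1 ++ l2) = wordProd n l1 * wordProd n l2 := by
  simp [wordProd]

lemma Pmap_succ {n : ℕ} {l : List ℕ} {t : ℕ} (ht : t < l.length) :
    Pmap n l (t+1) = gen n (l.getD t 0) * Pmap n l t := by
  unfold Pmap
  rw [take_succ_eq ht, wordProd_append', mul_inv_rev]
  congr 1
  rw [eq_comm, eq_inv_iff_mul_eq_one]
  simpa [wordProd] using gen_gen n (l.getD t 0)

lemma Pmap_zero (n : ℕ) (l : List ℕ) : Pmap n l 0 = 1 := by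
  simp [Pmap, wordProd]

lemma step_val {n : ℕ} {l : List ℕ} (hval : ∀ i ∈ l, 1 ≤ i ∧ i < n) {t : ℕ}
    (ht : t < l.length) (zz : Fin n) :
    (Pmap n l (t+1) zz).val =
      if (Pmap n l t zz).val = l.getD t 0 - 1 then l.getD t 0
      else if (Pmap n l t zz).val = l.getD t 0 then l.getD t 0 - 1
      else (Pmap n l t zz).val := by
  obtain ⟨h1, h2⟩ := getD_valid hval ht
  rw [Pmap_succ ht]
  exact gen_apply_val h1 h2 _

def Crossed (n : ℕ) (l : List ℕ) (y z : Fin n) (t : ℕ) : Prop :=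
  Pmap n l (t+1) y ≠ Pmap n l t y ∧ Pmap n l (t+1) z ≠ Pmap n l t z

instance {n : ℕ} {l : List ℕ} {y z : Fin n} {t : ℕ} : Decidable (Crossed n l y z t) := by
  unfold Crossed; infer_instance

lemma crossed_symm {n : ℕ} {l : List ℕ} {y z : Fin n} {t : ℕ} :
    Crossed n l y z t ↔ Crossed n l z y t := by
  unfold Crossed; tauto

/-- count of crossings of the pair {y,z} during the whole word -/
def CC (n : ℕ) (l : List ℕ) (y z : Fin n) : ℕ :=
  ((Finset.range l.length).filter (fun t => Crossed n l y z t)).card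

lemma crossed_swap {n : ℕ} {l : List ℕ} (hval : ∀ i ∈ l, 1 ≤ i ∧ i < n) {t : ℕ}
    (ht : t < l.length) {y z : Fin n} (hyz : y ≠ z) (hc : Crossed n l y z t) :
    Pmap n l (t+1) y = Pmap n l t z ∧ Pmap n l (t+1) z = Pmap n l t y := by
  obtain ⟨hj1, hj2⟩ := getD_valid hval ht
  have hy := step_val hval ht y
  have hz := step_val hval ht z
  have hne : (Pmap n l t y).val ≠ (Pmap n l t z).val :=
    fun h => hyz ((Pmap n l t).injective (Fin.ext h))
  obtain ⟨hcy, hcz⟩ := hc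
  have hcy' : (Pmap n l (t+1) y).val ≠ (Pmap n l t y).val := fun h => hcy (Fin.ext h)
  have hcz' : (Pmap n l (t+1) z).val ≠ (Pmap n l t z).val := fun h => hcz (Fin.ext h)
  constructor <;> apply Fin.ext <;> split_ifs at hy hz <;> omega

lemma not_crossed_order {n : ℕ} {l : List ℕ} (hval : ∀ i ∈ l, 1 ≤ i ∧ i < n) {t : ℕ}
    (ht : t < l.length) {y z : Fin n} (hyz : y ≠ z) (hc : ¬ Crossed n l y z t) :
    (Pmap n l (t+1) y < Pmap n l (t+1) z ↔ Pmap n l t y < Pmap n l t z) := by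
  obtain ⟨hj1, hj2⟩ := getD_valid hval ht
  have hy := step_val hval ht y
  have hz := step_val hval ht z
  have hne : (Pmap n l t y).val ≠ (Pmap n l t z).val :=
    fun h => hyz ((Pmap n l t).injective (Fin.ext h))
  rw [Crossed, not_and_or] at hc
  have hc' : (Pmap n l (t+1) y).val = (Pmap n l t y).val ∨
      (Pmap n l (t+1) z).val = (Pmap n l t z).val := by
    rcases hc with h | h
    · left; rw [not_ne_iff] at h; rw [h]
    · right; rw [not_ne_iff] at h; rw [h]
  rw [Fin.lt_def, Fin.lt_def]
  split_ifs at hy hz <;> omega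

lemma order_parity {n : ℕ} {l : List ℕ} (hval : ∀ i ∈ l, 1 ≤ i ∧ i < n)
    {y z : Fin n} (hyz : y ≠ z) :
    ∀ T, T ≤ l.length →
      (Pmap n l T y < Pmap n l T z ↔
        (y < z ↔ Even (((Finset.range T).filter (fun t => Crossed n l y z t)).card)) ) := by
  intro T
  induction T with
  | zero => intro _; simp [Pmap_zero]
  | succ T ih =>
    intro hT
    have hT' : T < l.length := by omega
    have ihT := ih (le_of_lt hT')
    rw [Finset.range_add_one, Finset.filter_insert]
    have hinj : Pmap n l T y ≠ Pmap n l T z := fun h => hyz ((Pmap n l T).injective h)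
    by_cases hc : Crossed n l y z T
    · rw [if_pos hc, Finset.card_insert_of_notMem (by simp)]
      obtain ⟨e1, e2⟩ := crossed_swap hval hT' hyz hc
      rw [e1, e2, Nat.even_add_one]
      have horder : Pmap n l T z < Pmap n l T y ↔ ¬ (Pmap n l T y < Pmap n l T z) := by
        constructor
        · exact fun h => not_lt.mpr (le_of_lt h)
        · intro h; rcases lt_or_eq_of_le (not_lt.mp h) with h' | h'
          · exact h'
          · exact absurd h'.symm hinj
      rw [horder, ihT]
      tauto
    · rw [if_neg hc, not_crossed_order hval hT' hyz hc, ihT]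

/-- the sorted-pairs finset -/
def Pairs (n : ℕ) : Finset (Fin n × Fin n) := Finset.univ.filter (fun p => p.1 < p.2)

lemma step_unique_pair {n : ℕ} {l : List ℕ} (hval : ∀ i ∈ l, 1 ≤ i ∧ i < n) {t : ℕ}
    (ht : t < l.length) :
    ((Pairs n).filter (fun p => Crossed n l p.1 p.2 t)).card = 1 := by
  obtain ⟨hj1, hj2⟩ := getD_valid hval ht
  set j := l.getD t 0 with hj
  have hjn : j - 1 < n := by omega
  obtain ⟨α, hα⟩ : ∃ α, α = (Pmap n l t)⁻¹ ⟨j - 1, hjn⟩ := ⟨_, rfl⟩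
  obtain ⟨β, hβ⟩ : ∃ β, β = (Pmap n l t)⁻¹ ⟨j, hj2⟩ := ⟨_, rfl⟩
  have hab : α ≠ β := by
    rw [hα, hβ]
    intro h
    have := congrArg (Pmap n l t) h
    simp only [Equiv.Perm.apply_inv_self] at this
    have := congrArg Fin.val this
    simp at this; omega
  have hmoved : ∀ zz : Fin n, (Pmap n l (t+1) zz ≠ Pmap n l t zz) ↔ (zz = α ∨ zz = β) := by
    intro zz
    have hs := step_val hval ht zz
    constructor
    · intro hmv
      have hmv' : (Pmap n l (t+1) zz).val ≠ (Pmap n l t zz).val := fun h => hmv (Fin.ext h)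
      have : (Pmap n l t zz).val = j - 1 ∨ (Pmap n l t zz).val = j := by
        split_ifs at hs <;> omega
      rcases this with h | h
      · left
        rw [hα, Equiv.Perm.eq_inv_iff_eq]
        exact Fin.ext h
      · right
        rw [hβ, Equiv.Perm.eq_inv_iff_eq]
        exact Fin.ext h
    · intro hor
      have : (Pmap n l t zz).val = j - 1 ∨ (Pmap n l t zz).val = j := by
        rcases hor with h | h
        · left; rw [h, hα]; simp [Equiv.Perm.apply_inv_self]
        · right; rw [h, hβ]; simp [Equiv.Perm.apply_inv_self]
      intro heq
      have heq' := congrArg Fin.val heq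
      rw [hs] at heq'
      split_ifs at heq' <;> omega
  have hfilter : (Pairs n).filter (fun p => Crossed n l p.1 p.2 t)
      = {if α < β then (α, β) else (β, α)} := by
    ext ⟨y, z⟩
    simp only [Pairs, Finset.mem_filter, Finset.mem_univ, true_and, Finset.mem_singleton]
    constructor
    · rintro ⟨hyz, hcy, hcz⟩
      rw [hmoved y] at hcy
      rw [hmoved z] at hcz
      rcases hcy with rfl | rfl <;> rcases hcz with rfl | rfl
      · exact absurd hyz (lt_irrefl _)
      · rw [if_pos hyz]
      · rw [if_neg (not_lt.mpr (le_of_lt hyz))]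
      · exact absurd hyz (lt_irrefl _)
    · intro h
      have hcross : Crossed n l α β t := ⟨(hmoved α).mpr (Or.inl rfl), (hmoved β).mpr (Or.inr rfl)⟩
      split_ifs at h with hab'
      · rw [Prod.ext_iff] at h
        obtain ⟨h1, h2⟩ := h
        subst h1; subst h2
        exact ⟨hab', hcross.1, hcross.2⟩
      · rw [Prod.ext_iff] at h
        obtain ⟨h1, h2⟩ := h
        subst h1; subst h2
        exact ⟨lt_of_le_of_ne (not_lt.mp hab') (Ne.symm hab), hcross.2, hcross.1⟩
  rw [hfilter, Finset.card_singleton]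

lemma sum_CC {n : ℕ} {l : List ℕ} (hval : ∀ i ∈ l, 1 ≤ i ∧ i < n) :
    ∑ p ∈ Pairs n, CC n l p.1 p.2 = l.length := by
  have : ∀ p ∈ Pairs n, CC n l p.1 p.2
      = ∑ t ∈ Finset.range l.length, if Crossed n l p.1 p.2 t then 1 else 0 := by
    intro p _
    rw [CC, Finset.card_filter]
  rw [Finset.sum_congr rfl this, Finset.sum_comm]
  have : ∀ t ∈ Finset.range l.length,
      (∑ p ∈ Pairs n, if Crossed n l p.1 p.2 t then 1 else 0) = 1 := by
    intro t htr
    rw [← Finset.card_filter]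
    exact step_unique_pair hval (Finset.mem_range.mp htr)
  rw [Finset.sum_congr rfl this, Finset.sum_const, Finset.card_range, smul_eq_mul, mul_one]


lemma len_le_Ninv (n : ℕ) (w : Equiv.Perm (Fin n)) : len n w ≤ Ninv n w⁻¹ := by
  obtain ⟨l, h1, h2, h3⟩ := exists_word n w
  exact Nat.sInf_le ⟨l, h1, h2, h3⟩

lemma CC_master {n : ℕ} {w : Equiv.Perm (Fin n)} {l : List ℕ}
    (hval : ∀ i ∈ l, 1 ≤ i ∧ i < n) (hprod : wordProd n l = w) (hlen : l.length = len n w) :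
    ∀ y z : Fin n, y < z → CC n l y z = if w⁻¹ z < w⁻¹ y then 1 else 0 := by
  have hPL : Pmap n l l.length = w⁻¹ := by rw [Pmap, List.take_length, hprod]
  have hpar : ∀ y z : Fin n, y < z → (w⁻¹ y < w⁻¹ z ↔ Even (CC n l y z)) := by
    intro y z hyz
    have h := order_parity hval (ne_of_lt hyz) l.length le_rfl
    rw [hPL] at h
    rw [CC]
    rw [h]
    simp only [hyz, true_iff]
  have hpoint : ∀ p ∈ Pairs n, (if w⁻¹ p.2 < w⁻¹ p.1 then 1 else 0) ≤ CC n l p.1 p.2 := by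
    rintro ⟨y, z⟩ hp
    simp only [Pairs, Finset.mem_filter, Finset.mem_univ, true_and] at hp
    dsimp only at hp ⊢
    split_ifs with h
    · by_contra hcc
      have h0 : CC n l y z = 0 := by omega
      have heven : Even (CC n l y z) := by simp [h0]
      have := (hpar y z hp).mpr heven
      exact absurd this (not_lt.mpr h.le)
    · omega
  have hsum1 : ∑ p ∈ Pairs n, (if w⁻¹ p.2 < w⁻¹ p.1 then 1 else 0) = Ninv n w⁻¹ := by
    rw [← Finset.card_filter]
    congr 1
    rw [Invs, Pairs, Finset.filter_filter]
  have hsum2 := sum_CC hval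
  have hlen2 : l.length ≤ Ninv n w⁻¹ := hlen ▸ len_le_Ninv n w
  have heq : ∀ p ∈ Pairs n, (if w⁻¹ p.2 < w⁻¹ p.1 then 1 else 0) = CC n l p.1 p.2 := by
    by_contra hcontra
    push_neg at hcontra
    obtain ⟨p, hp, hne⟩ := hcontra
    have hstrict : (if w⁻¹ p.2 < w⁻¹ p.1 then 1 else 0) < CC n l p.1 p.2 :=
      lt_of_le_of_ne (hpoint p hp) hne
    have := Finset.sum_lt_sum hpoint ⟨p, hp, hstrict⟩
    rw [hsum1, hsum2] at this
    omega
  intro y z hyz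
  have hp : (y, z) ∈ Pairs n := by
    simp only [Pairs, Finset.mem_filter, Finset.mem_univ, true_and]; exact hyz
  exact (heq (y, z) hp).symm

lemma CC_symm {n : ℕ} {l : List ℕ} (y z : Fin n) : CC n l y z = CC n l z y := by
  unfold CC
  congr 1
  apply Finset.filter_congr
  intro t _
  simp [crossed_symm]

/-- symmetric "pair inverted by w" relation -/
def Invd {n : ℕ} (w : Equiv.Perm (Fin n)) (y z : Fin n) : Prop :=
  (y < z → w⁻¹ z < w⁻¹ y) ∧ (z < y → w⁻¹ y < w⁻¹ z)

lemma CC_le_one {n : ℕ} {w : Equiv.Perm (Fin n)} {l : List ℕ}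
    (hval : ∀ i ∈ l, 1 ≤ i ∧ i < n) (hprod : wordProd n l = w) (hlen : l.length = len n w)
    {y z : Fin n} (hyz : y ≠ z) : CC n l y z ≤ 1 := by
  rcases lt_or_gt_of_ne hyz with h | h
  · rw [CC_master hval hprod hlen y z h]; split_ifs <;> omega
  · rw [CC_symm, CC_master hval hprod hlen z y h]; split_ifs <;> omega

lemma Invd_of_CC_pos {n : ℕ} {w : Equiv.Perm (Fin n)} {l : List ℕ}
    (hval : ∀ i ∈ l, 1 ≤ i ∧ i < n) (hprod : wordProd n l = w) (hlen : l.length = len n w)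
    {y z : Fin n} (hcc : 1 ≤ CC n l y z) : Invd w y z := by
  constructor
  · intro h
    have := CC_master hval hprod hlen y z h
    rw [this] at hcc
    split_ifs at hcc with h'
    · exact h'
    · omega
  · intro h
    have := CC_master hval hprod hlen z y h
    rw [CC_symm] at hcc
    rw [this] at hcc
    split_ifs at hcc with h'
    · exact h'
    · omega

lemma patt {n : ℕ} {w : Equiv.Perm (Fin n)} (hw : Avoids321 n w) {z1 z2 z3 : Fin n}
    (h12 : z1 < z2) (h23 : z2 < z3) (f12 : w⁻¹ z2 < w⁻¹ z1) (f23 : w⁻¹ z3 < w⁻¹ z2) :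
    False := by
  apply hw
  refine ⟨w⁻¹ z3, w⁻¹ z2, w⁻¹ z1, f23, f12, ?_, ?_⟩
  · rw [Equiv.Perm.apply_inv_self, Equiv.Perm.apply_inv_self]; exact h23
  · rw [Equiv.Perm.apply_inv_self, Equiv.Perm.apply_inv_self]; exact h12

lemma pattern321 {n : ℕ} {w : Equiv.Perm (Fin n)} (hw : Avoids321 n w) {x u v : Fin n}
    (hxu : x ≠ u) (hxv : x ≠ v) (huv : u ≠ v)
    (Ixu : Invd w x u) (Ixv : Invd w x v) (Iuv : Invd w u v) : False := by
  rcases lt_or_gt_of_ne hxu with h | h <;> rcases lt_or_gt_of_ne hxv with h' | h' <;>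
    rcases lt_or_gt_of_ne huv with h'' | h''
  · exact patt hw h h'' (Ixu.1 h) (Iuv.1 h'')
  · exact patt hw h' h'' (Ixv.1 h') (Iuv.2 h'')
  · exact absurd (lt_trans (lt_trans h' h) h'') (lt_irrefl v)
  · exact patt hw h' h (Ixv.2 h') (Ixu.1 h)
  · exact patt hw h h' (Ixu.2 h) (Ixv.1 h')
  · exact absurd (lt_trans (lt_trans h'' h) h') (lt_irrefl v)
  · exact patt hw h'' h' (Iuv.1 h'') (Ixv.2 h')
  · exact patt hw h'' h (Iuv.2 h'') (Ixu.2 h)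

lemma stay_lemma {n : ℕ} {l : List ℕ} (hval : ∀ i ∈ l, 1 ≤ i ∧ i < n) {t1 t2 : ℕ}
    (h2 : t2 ≤ l.length) (pv : ℕ)
    (hfix : ∀ t, t1 ≤ t → t < t2 → l.getD t 0 ≠ pv ∧ l.getD t 0 ≠ pv + 1)
    (zz : Fin n) (hstart : (Pmap n l t1 zz).val = pv) :
    ∀ t, t1 ≤ t → t ≤ t2 → (Pmap n l t zz).val = pv := by
  intro t
  induction t with
  | zero =>
    intro h h'
    have e : t1 = 0 := by omega
    subst e
    exact hstart
  | succ T ih =>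
    intro h h'
    rcases eq_or_lt_of_le h with he | hlt
    · rw [he] at hstart; exact hstart
    · have hT : T < l.length := by omega
      have hs := step_val hval hT zz
      have hj1 := (getD_valid hval hT).1
      have hlet := hfix T (by omega) (by omega)
      have hih := ih (by omega) (by omega)
      split_ifs at hs <;> omega

lemma region_lemma {n : ℕ} {l : List ℕ} (hval : ∀ i ∈ l, 1 ≤ i ∧ i < n) {t1 t2 : ℕ}
    (h2 : t2 ≤ l.length) (iv : ℕ)
    (hni : ∀ t, t1 ≤ t → t < t2 → l.getD t 0 ≠ iv) (zz : Fin n) :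
    ∀ t, t1 ≤ t → t ≤ t2 → ((Pmap n l t zz).val < iv ↔ (Pmap n l t1 zz).val < iv) := by
  intro t
  induction t with
  | zero =>
    intro h h'
    have e : t1 = 0 := by omega
    subst e
    exact Iff.rfl
  | succ T ih =>
    intro h h'
    rcases eq_or_lt_of_le h with he | hlt
    · subst he
      exact Iff.rfl
    · have hT : T < l.length := by omega
      have hs := step_val hval hT zz
      have hj1 := (getD_valid hval hT).1
      have hlet := hni T (by omega) (by omega)
      have hih := ih (by omega) (by omega)
      rw [← hih]
      split_ifs at hs <;> omega

lemma find_cross {n : ℕ} {l : List ℕ} (hval : ∀ i ∈ l, 1 ≤ i ∧ i < n) {t1 t2 : ℕ}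
    (h2 : t2 ≤ l.length) {y z : Fin n} (hyz : y ≠ z) (hle : t1 ≤ t2)
    (h1 : Pmap n l t1 y < Pmap n l t1 z) (hflip : ¬ (Pmap n l t2 y < Pmap n l t2 z)) :
    ∃ t, t1 ≤ t ∧ t < t2 ∧ Crossed n l y z t := by
  by_contra hcon
  push_neg at hcon
  apply hflip
  have key : ∀ t, t1 ≤ t → t ≤ t2 → (Pmap n l t y < Pmap n l t z) := by
    intro t
    induction t with
    | zero =>
      intro h h'
      have e : t1 = 0 := by omega
      subst e
      exact h1
    | succ T ih =>
      intro h h'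
      rcases eq_or_lt_of_le h with he | hlt
      · subst he
        exact h1
      · have hT : T < l.length := by omega
        rw [not_crossed_order hval hT hyz (hcon T (by omega) (by omega))]
        exact ih (by omega) (by omega)
  exact key t2 hle le_rfl

lemma Pmap_prev {n : ℕ} {l : List ℕ} {t : ℕ} (ht : t < l.length) :
    Pmap n l t = gen n (l.getD t 0) * Pmap n l (t+1) := by
  rw [Pmap_succ ht, ← mul_assoc, gen_gen, one_mul]

lemma gen_pA {n i : ℕ} (h1 : 1 ≤ i) (h2 : i < n) :
    gen n i ⟨i - 1, by omega⟩ = ⟨i, h2⟩ := by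
  apply Fin.ext
  rw [gen_apply_val h1 h2]
  have e : ((⟨i - 1, by omega⟩ : Fin n)).val = i - 1 := rfl
  rw [e]
  have e2 : ((⟨i, h2⟩ : Fin n)).val = i := rfl
  rw [e2, if_pos rfl]

lemma gen_pB {n i : ℕ} (h1 : 1 ≤ i) (h2 : i < n) :
    gen n i ⟨i, h2⟩ = ⟨i - 1, by omega⟩ := by
  apply Fin.ext
  rw [gen_apply_val h1 h2]
  have e : ((⟨i, h2⟩ : Fin n)).val = i := rfl
  have e2 : ((⟨i - 1, by omega⟩ : Fin n)).val = i - 1 := rfl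
  rw [e, e2, if_neg (by omega), if_pos rfl]

lemma CC_pos_of_crossed {n : ℕ} {l : List ℕ} {y z : Fin n} {t : ℕ}
    (ht : t < l.length) (hc : Crossed n l y z t) : 1 ≤ CC n l y z :=
  Finset.card_pos.mpr ⟨t, Finset.mem_filter.mpr ⟨Finset.mem_range.mpr ht, hc⟩⟩

lemma caseA {n : ℕ} {w : Equiv.Perm (Fin n)} {l : List ℕ}
    (hw : Avoids321 n w)
    (hval : ∀ i ∈ l, 1 ≤ i ∧ i < n) (hprod : wordProd n l = w) (hlen : l.length = len n w)
    {a b : ℕ} (hab : a < b) (hblen : b < l.length)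
    (hib : l.getD b 0 = l.getD a 0)
    (hno_i : ∀ c, a < c → c < b → l.getD c 0 ≠ l.getD a 0)
    (hno_im1 : ∀ c, a < c → c < b → l.getD c 0 ≠ l.getD a 0 - 1) : False := by
  have halen : a < l.length := by omega
  obtain ⟨hi1, hi2⟩ := getD_valid hval halen
  obtain ⟨i, hi⟩ : ∃ i, i = l.getD a 0 := ⟨_, rfl⟩
  rw [← hi] at hib hno_i hno_im1 hi1 hi2
  have hin : i - 1 < n := by omega
  -- positions
  obtain ⟨x, hx⟩ : ∃ x, x = (Pmap n l (a+1))⁻¹ ⟨i - 1, hin⟩ := ⟨_, rfl⟩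
  obtain ⟨u, hu⟩ : ∃ u, u = (Pmap n l (a+1))⁻¹ ⟨i, hi2⟩ := ⟨_, rfl⟩
  obtain ⟨v, hv⟩ : ∃ v, v = (Pmap n l b)⁻¹ ⟨i, hi2⟩ := ⟨_, rfl⟩
  have hxa1 : Pmap n l (a+1) x = ⟨i - 1, hin⟩ := by rw [hx]; exact Equiv.Perm.apply_inv_self _ _
  have hua1 : Pmap n l (a+1) u = ⟨i, hi2⟩ := by rw [hu]; exact Equiv.Perm.apply_inv_self _ _
  have hvb : Pmap n l b v = ⟨i, hi2⟩ := by rw [hv]; exact Equiv.Perm.apply_inv_self _ _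
  have hpApB : (⟨i - 1, hin⟩ : Fin n) ≠ ⟨i, hi2⟩ := by
    intro h
    have := congrArg Fin.val h
    simp only at this
    omega
  have hprevA : Pmap n l a = gen n i * Pmap n l (a+1) := by
    have := Pmap_prev (n := n) halen
    rw [← hi] at this
    exact this
  have hxa : Pmap n l a x = ⟨i, hi2⟩ := by
    rw [hprevA]
    simp only [Equiv.Perm.mul_apply]
    rw [hxa1, gen_pA hi1 hi2]
  have hua : Pmap n l a u = ⟨i - 1, hin⟩ := by
    rw [hprevA]
    simp only [Equiv.Perm.mul_apply]
    rw [hua1, gen_pB hi1 hi2]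
  have hcross_a : Crossed n l x u a := by
    constructor
    · rw [hxa1, hxa]; exact hpApB
    · rw [hua1, hua]; exact fun h => hpApB h.symm
  -- x stays at i-1
  have hx_stay : ∀ t, a + 1 ≤ t → t ≤ b → (Pmap n l t x).val = i - 1 := by
    apply stay_lemma hval (le_of_lt hblen) (i - 1) _ x (by rw [hxa1])
    intro t h1 h2
    constructor
    · exact hno_im1 t (by omega) (by omega)
    · have := hno_i t (by omega) (by omega)
      omega
  have hxb : Pmap n l b x = ⟨i - 1, hin⟩ := Fin.ext (hx_stay b (by omega) le_rfl)
  have hsuccB : Pmap n l (b+1) = gen n i * Pmap n l b := by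
    have := Pmap_succ (n := n) hblen
    rw [hib] at this
    exact this
  have hxb1 : Pmap n l (b+1) x = ⟨i, hi2⟩ := by
    rw [hsuccB]
    simp only [Equiv.Perm.mul_apply]
    rw [hxb, gen_pA hi1 hi2]
  have hvb1 : Pmap n l (b+1) v = ⟨i - 1, hin⟩ := by
    rw [hsuccB]
    simp only [Equiv.Perm.mul_apply]
    rw [hvb, gen_pB hi1 hi2]
  have hcross_b : Crossed n l x v b := by
    constructor
    · rw [hxb1, hxb]; exact fun h => hpApB h.symm
    · rw [hvb1, hvb]; exact hpApB
  have hxu : x ≠ u := by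
    intro h
    apply hpApB
    rw [← hxa1, h, hua1]
  have hxv : x ≠ v := by
    intro h
    apply hpApB
    rw [← hxb, h, hvb]
  by_cases huv : u = v
  · -- pair (x,u) crosses twice
    have hcb : Crossed n l x u b := huv ▸ hcross_b
    have hsub : ({a, b} : Finset ℕ) ⊆
        (Finset.range l.length).filter (fun t => Crossed n l x u t) := by
      intro t ht
      simp only [Finset.mem_insert, Finset.mem_singleton] at ht
      rcases ht with rfl | rfl
      · exact Finset.mem_filter.mpr ⟨Finset.mem_range.mpr halen, hcross_a⟩
      · exact Finset.mem_filter.mpr ⟨Finset.mem_range.mpr hblen, hcb⟩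
    have h2 : 2 ≤ CC n l x u := by
      have := Finset.card_le_card hsub
      rwa [Finset.card_insert_of_notMem (by simp; omega), Finset.card_singleton] at this
    have := CC_le_one hval hprod hlen hxu
    omega
  · -- find crossing of u and v
    have hreg : ∀ zz : Fin n, ∀ t, a + 1 ≤ t → t ≤ b →
        ((Pmap n l t zz).val < i ↔ (Pmap n l (a+1) zz).val < i) := by
      intro zz
      apply region_lemma hval (le_of_lt hblen) i
      intro t h1 h2
      exact hno_i t (by omega) (by omega)
    have hu_ge : ∀ t, a + 1 ≤ t → t ≤ b → i ≤ (Pmap n l t u).val := by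
      intro t h1 h2
      have := hreg u t h1 h2
      rw [hua1] at this
      simp only at this
      omega
    have hv_a1 : i ≤ (Pmap n l (a+1) v).val := by
      have := hreg v b (by omega) le_rfl
      rw [hvb] at this
      simp only at this
      omega
    have hv_ge : ∀ t, a + 1 ≤ t → t ≤ b → i ≤ (Pmap n l t v).val := by
      intro t h1 h2
      have := hreg v t h1 h2
      omega
    have hord1 : Pmap n l (a+1) u < Pmap n l (a+1) v := by
      rw [Fin.lt_def, hua1]
      have hne : Pmap n l (a+1) u ≠ Pmap n l (a+1) v :=
        fun h => huv ((Pmap n l (a+1)).injective h)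
      have hne' : (Pmap n l (a+1) u).val ≠ (Pmap n l (a+1) v).val :=
        fun h => hne (Fin.ext h)
      rw [hua1] at hne'
      have := hv_a1
      simp only at hne' ⊢
      omega
    have hord2 : ¬ (Pmap n l b u < Pmap n l b v) := by
      rw [Fin.lt_def, hvb]
      have hne : Pmap n l b u ≠ Pmap n l b v :=
        fun h => huv ((Pmap n l b).injective h)
      have hne' : (Pmap n l b u).val ≠ (Pmap n l b v).val := fun h => hne (Fin.ext h)
      rw [hvb] at hne'
      have := hu_ge b (by omega) le_rfl
      simp only at hne' ⊢
      omega
    obtain ⟨t, ht1, ht2, htc⟩ :=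
      find_cross hval (le_of_lt hblen) huv (by omega) hord1 hord2
    have Ixu : Invd w x u :=
      Invd_of_CC_pos hval hprod hlen (CC_pos_of_crossed halen hcross_a)
    have Ixv : Invd w x v :=
      Invd_of_CC_pos hval hprod hlen (CC_pos_of_crossed hblen hcross_b)
    have Iuv : Invd w u v :=
      Invd_of_CC_pos hval hprod hlen (CC_pos_of_crossed (by omega) htc)
    exact pattern321 hw hxu hxv huv Ixu Ixv Iuv

lemma caseB {n : ℕ} {w : Equiv.Perm (Fin n)} {l : List ℕ}
    (hw : Avoids321 n w)
    (hval : ∀ i ∈ l, 1 ≤ i ∧ i < n) (hprod : wordProd n l = w) (hlen : l.length = len n w)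
    {a b : ℕ} (hab : a < b) (hblen : b < l.length)
    (hib : l.getD b 0 = l.getD a 0)
    (hno_i : ∀ c, a < c → c < b → l.getD c 0 ≠ l.getD a 0)
    (hno_ip1 : ∀ c, a < c → c < b → l.getD c 0 ≠ l.getD a 0 + 1) : False := by
  have halen : a < l.length := by omega
  obtain ⟨hi1, hi2⟩ := getD_valid hval halen
  obtain ⟨i, hi⟩ : ∃ i, i = l.getD a 0 := ⟨_, rfl⟩
  rw [← hi] at hib hno_i hno_ip1 hi1 hi2
  have hin : i - 1 < n := by omega
  obtain ⟨x, hx⟩ : ∃ x, x = (Pmap n l (a+1))⁻¹ ⟨i, hi2⟩ := ⟨_, rfl⟩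
  obtain ⟨u, hu⟩ : ∃ u, u = (Pmap n l (a+1))⁻¹ ⟨i - 1, hin⟩ := ⟨_, rfl⟩
  obtain ⟨v, hv⟩ : ∃ v, v = (Pmap n l b)⁻¹ ⟨i - 1, hin⟩ := ⟨_, rfl⟩
  have hxa1 : Pmap n l (a+1) x = ⟨i, hi2⟩ := by rw [hx]; exact Equiv.Perm.apply_inv_self _ _
  have hua1 : Pmap n l (a+1) u = ⟨i - 1, hin⟩ := by rw [hu]; exact Equiv.Perm.apply_inv_self _ _
  have hvb : Pmap n l b v = ⟨i - 1, hin⟩ := by rw [hv]; exact Equiv.Perm.apply_inv_self _ _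
  have hpApB : (⟨i - 1, hin⟩ : Fin n) ≠ ⟨i, hi2⟩ := by
    intro h
    have := congrArg Fin.val h
    simp only at this
    omega
  have hprevA : Pmap n l a = gen n i * Pmap n l (a+1) := by
    have := Pmap_prev (n := n) halen
    rw [← hi] at this
    exact this
  have hxa : Pmap n l a x = ⟨i - 1, hin⟩ := by
    rw [hprevA]
    simp only [Equiv.Perm.mul_apply]
    rw [hxa1, gen_pB hi1 hi2]
  have hua : Pmap n l a u = ⟨i, hi2⟩ := by
    rw [hprevA]
    simp only [Equiv.Perm.mul_apply]
    rw [hua1, gen_pA hi1 hi2]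
  have hcross_a : Crossed n l x u a := by
    constructor
    · rw [hxa1, hxa]; exact fun h => hpApB h.symm
    · rw [hua1, hua]; exact hpApB
  -- x stays at i
  have hx_stay : ∀ t, a + 1 ≤ t → t ≤ b → (Pmap n l t x).val = i := by
    apply stay_lemma hval (le_of_lt hblen) i _ x (by rw [hxa1])
    intro t h1 h2
    exact ⟨hno_i t (by omega) (by omega), hno_ip1 t (by omega) (by omega)⟩
  have hxb : Pmap n l b x = ⟨i, hi2⟩ := Fin.ext (hx_stay b (by omega) le_rfl)
  have hsuccB : Pmap n l (b+1) = gen n i * Pmap n l b := by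
    have := Pmap_succ (n := n) hblen
    rw [hib] at this
    exact this
  have hxb1 : Pmap n l (b+1) x = ⟨i - 1, hin⟩ := by
    rw [hsuccB]
    simp only [Equiv.Perm.mul_apply]
    rw [hxb, gen_pB hi1 hi2]
  have hvb1 : Pmap n l (b+1) v = ⟨i, hi2⟩ := by
    rw [hsuccB]
    simp only [Equiv.Perm.mul_apply]
    rw [hvb, gen_pA hi1 hi2]
  have hcross_b : Crossed n l x v b := by
    constructor
    · rw [hxb1, hxb]; exact hpApB
    · rw [hvb1, hvb]; exact fun h => hpApB h.symm
  have hxu : x ≠ u := by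
    intro h
    apply hpApB
    rw [← hua1, ← h, hxa1]
  have hxv : x ≠ v := by
    intro h
    apply hpApB
    rw [← hvb, ← h, hxb]
  by_cases huv : u = v
  · have hcb : Crossed n l x u b := huv ▸ hcross_b
    have hsub : ({a, b} : Finset ℕ) ⊆
        (Finset.range l.length).filter (fun t => Crossed n l x u t) := by
      intro t ht
      simp only [Finset.mem_insert, Finset.mem_singleton] at ht
      rcases ht with rfl | rfl
      · exact Finset.mem_filter.mpr ⟨Finset.mem_range.mpr halen, hcross_a⟩
      · exact Finset.mem_filter.mpr ⟨Finset.mem_range.mpr hblen, hcb⟩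
    have h2 : 2 ≤ CC n l x u := by
      have := Finset.card_le_card hsub
      rwa [Finset.card_insert_of_notMem (by simp; omega), Finset.card_singleton] at this
    have := CC_le_one hval hprod hlen hxu
    omega
  · have hreg : ∀ zz : Fin n, ∀ t, a + 1 ≤ t → t ≤ b →
        ((Pmap n l t zz).val < i ↔ (Pmap n l (a+1) zz).val < i) := by
      intro zz
      apply region_lemma hval (le_of_lt hblen) i
      intro t h1 h2
      exact hno_i t (by omega) (by omega)
    have hu_lt : ∀ t, a + 1 ≤ t → t ≤ b → (Pmap n l t u).val < i := by
      intro t h1 h2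
      have := hreg u t h1 h2
      rw [hua1] at this
      simp only at this
      omega
    have hv_a1 : (Pmap n l (a+1) v).val < i := by
      have := hreg v b (by omega) le_rfl
      rw [hvb] at this
      simp only at this
      omega
    have hv_lt : ∀ t, a + 1 ≤ t → t ≤ b → (Pmap n l t v).val < i := by
      intro t h1 h2
      have := hreg v t h1 h2
      omega
    have hord1 : Pmap n l (a+1) v < Pmap n l (a+1) u := by
      rw [Fin.lt_def, hua1]
      have hne : Pmap n l (a+1) u ≠ Pmap n l (a+1) v :=
        fun h => huv ((Pmap n l (a+1)).injective h)
      have hne' : (Pmap n l (a+1) u).val ≠ (Pmap n l (a+1) v).val :=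
        fun h => hne (Fin.ext h)
      rw [hua1] at hne'
      have := hv_a1
      simp only at hne' ⊢
      omega
    have hord2 : ¬ (Pmap n l b v < Pmap n l b u) := by
      rw [Fin.lt_def, hvb]
      have hne : Pmap n l b u ≠ Pmap n l b v :=
        fun h => huv ((Pmap n l b).injective h)
      have hne' : (Pmap n l b u).val ≠ (Pmap n l b v).val := fun h => hne (Fin.ext h)
      rw [hvb] at hne'
      have := hu_lt b (by omega) le_rfl
      simp only at hne' ⊢
      omega
    obtain ⟨t, ht1, ht2, htc⟩ :=
      find_cross hval (le_of_lt hblen) (fun h => huv h.symm) (by omega) hord1 hord2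
    have Ixu : Invd w x u :=
      Invd_of_CC_pos hval hprod hlen (CC_pos_of_crossed halen hcross_a)
    have Ixv : Invd w x v :=
      Invd_of_CC_pos hval hprod hlen (CC_pos_of_crossed hblen hcross_b)
    have Iuv : Invd w u v := by
      apply Invd_of_CC_pos hval hprod hlen
      rw [CC_symm]
      exact CC_pos_of_crossed (by omega) htc
    exact pattern321 hw hxu hxv huv Ixu Ixv Iuv

end Stmt1Aux


/-- in any reduced word for a 321-avoiding `w`, any two occurrences of the
same generator `s_i` are separated by an occurrence of `s_{i-1}` and one of `s_{i+1}`. -/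
theorem stmt1 (n : ℕ) (w : Equiv.Perm (Fin n)) (hw : Avoids321 n w)
    (l : List ℕ) (hl : IsReducedWord n w l)
    (a b : ℕ) (hab : a < b) (hb : b < l.length) (hsame : l.getD a 0 = l.getD b 0) :
    (∃ c, a < c ∧ c < b ∧ l.getD c 0 = l.getD a 0 - 1) ∧
    (∃ c, a < c ∧ c < b ∧ l.getD c 0 = l.getD a 0 + 1) := by

  obtain ⟨hval, hprod, hlen⟩ := hl
  suffices H : ∀ d a b, b - a ≤ d → a < b → b < l.length → l.getD a 0 = l.getD b 0 →
      (∃ c, a < c ∧ c < b ∧ l.getD c 0 = l.getD a 0 - 1) ∧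
      (∃ c, a < c ∧ c < b ∧ l.getD c 0 = l.getD a 0 + 1) by
    exact H (b - a) a b le_rfl hab hb hsame
  intro d
  induction d with
  | zero =>
    intro a b h1 h2 h3 h4
    exact absurd h1 (by omega)
  | succ d ih =>
    intro a b h1 h2 h3 h4
    by_cases hmid : ∃ c, a < c ∧ c < b ∧ l.getD c 0 = l.getD a 0
    · obtain ⟨c, hc1, hc2, hc3⟩ := hmid
      obtain ⟨⟨c1, hc11, hc12, hc13⟩, -⟩ := ih a c (by omega) hc1 (by omega) hc3.symm
      obtain ⟨-, ⟨c2, hc21, hc22, hc23⟩⟩ := ih c b (by omega) hc2 h3 (hc3.trans h4)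
      exact ⟨⟨c1, hc11, by omega, hc13⟩, ⟨c2, by omega, hc22, by rw [hc23, hc3]⟩⟩
    · push_neg at hmid
      constructor
      · by_contra hno
        push_neg at hno
        exact Stmt1Aux.caseA hw hval hprod hlen h2 h3 h4.symm hmid hno
      · by_contra hno
        push_neg at hno
        exact Stmt1Aux.caseB hw hval hprod hlen h2 h3 h4.symm hmid hno
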